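/- arXiv:1612.03333 — 2 statements merged into one kernel-verified Lean document; each statement's English description precedes it below -/
import Mathlib

section
/- Let α ≠ 0, η ∈ ℝ and q > 0 be real parameters, let c = α/(q+1) + η(q+1)/α, and define u : ℝ × ℝ → ℝ by u(x,t) = (1/2 + (1/2)·tanh( (−α q)/(2(q+1)) · (x − c t) ))^(1/q) (real power, well defined since the base lies in (0,1)). Then u solves the generalized Burgers–Fisher equation with unit diffusion: for all x, t ∈ ℝ, ∂u/∂t (x,t) + α · u(x,t)^q · ∂u/∂x (x,t) − ∂²u/∂x² (x,t) = η · u(x,t) · (1 − u(x,t)^q). -/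
lemma my_tanh_bounds (x : ℝ) : -1 < Real.tanh x ∧ Real.tanh x < 1 := by
  have hc : 0 < Real.cosh x := Real.cosh_pos x
  have h1 : Real.cosh x ^ 2 - Real.sinh x ^ 2 = 1 := Real.cosh_sq_sub_sinh_sq x
  rw [Real.tanh_eq_sinh_div_cosh]
  constructor
  · rw [lt_div_iff₀ hc]; nlinarith
  · rw [div_lt_one hc]; nlinarith

lemma my_hasDerivAt_tanh (x : ℝ) : HasDerivAt Real.tanh (1 - Real.tanh x ^ 2) x := by
  have hc : 0 < Real.cosh x := Real.cosh_pos x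
  have h1 : Real.cosh x ^ 2 - Real.sinh x ^ 2 = 1 := Real.cosh_sq_sub_sinh_sq x
  have h : HasDerivAt (fun y => Real.sinh y / Real.cosh y)
      ((Real.cosh x * Real.cosh x - Real.sinh x * Real.sinh x) / Real.cosh x ^ 2) x :=
    (Real.hasDerivAt_sinh x).div (Real.hasDerivAt_cosh x) hc.ne'
  have heq : (fun y => Real.sinh y / Real.cosh y) = Real.tanh := by
    funext y; rw [Real.tanh_eq_sinh_div_cosh]
  rw [heq] at h
  convert h using 1
  rw [Real.tanh_eq_sinh_div_cosh]
  field_simp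

lemma my_g_pos (k s : ℝ) : 0 < 1/2 + (1/2) * Real.tanh (k * s) := by
  have := (my_tanh_bounds (k * s)).1; linarith

lemma my_hasDerivAt_g (k s : ℝ) :
    HasDerivAt (fun r : ℝ => 1/2 + (1/2) * Real.tanh (k * r))
      (2 * k * (1/2 + (1/2) * Real.tanh (k * s)) * (1 - (1/2 + (1/2) * Real.tanh (k * s)))) s := by
  have hlin : HasDerivAt (fun r : ℝ => k * r) (k * 1) s := (hasDerivAt_id s).const_mul k
  have h := (my_hasDerivAt_tanh (k * s)).comp s hlin
  have h2 : HasDerivAt (fun r : ℝ => 1/2 + (1/2) * Real.tanh (k * r))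
      (1/2 * ((1 - Real.tanh (k * s) ^ 2) * (k * 1))) s :=
    (h.const_mul ((1:ℝ)/2)).const_add ((1:ℝ)/2)
  convert h2 using 1
  ring

lemma my_hasDerivAt_f (k q : ℝ) (hq : 0 < q) (s : ℝ) :
    HasDerivAt (fun r : ℝ => (1/2 + (1/2) * Real.tanh (k * r)) ^ (1/q : ℝ))
      ((2 * k / q) * ((1/2 + (1/2) * Real.tanh (k * s)) ^ (1/q : ℝ))
        * (1 - (1/2 + (1/2) * Real.tanh (k * s)))) s := by
  have hpos := my_g_pos k s
  have h := (my_hasDerivAt_g k s).rpow_const (p := (1/q : ℝ)) (Or.inl hpos.ne')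
  set G : ℝ := 1/2 + (1/2) * Real.tanh (k * s) with hG
  convert h using 1
  rw [Real.rpow_sub hpos, Real.rpow_one]
  field_simp

lemma my_fq (k q : ℝ) (hq : 0 < q) (s : ℝ) :
    ((1/2 + (1/2) * Real.tanh (k * s)) ^ (1/q : ℝ)) ^ (q : ℝ) = 1/2 + (1/2) * Real.tanh (k * s) := by
  have hpos := my_g_pos k s
  rw [← Real.rpow_mul hpos.le, one_div_mul_cancel hq.ne', Real.rpow_one]


/-- The traveling-wave profile
`u(x,t) = (1/2 + (1/2)·tanh((−αq)/(2(q+1))·(x − c t)))^(1/q)` (real power)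
solves the generalized Burgers–Fisher equation with unit diffusion:
`u_t + α u^q u_x − u_xx = η u (1 − u^q)`. -/
theorem gbf_traveling_wave_solves
    (α η q : ℝ) (hα : α ≠ 0) (hq : 0 < q)
    (c : ℝ) (hc : c = α / (q + 1) + η * (q + 1) / α)
    (u : ℝ → ℝ → ℝ)
    (hu : ∀ x t : ℝ,
      u x t = (1/2 + (1/2) * Real.tanh ((-α * q) / (2 * (q + 1)) * (x - c * t))) ^ (1/q)) :
    ∀ x t : ℝ,
      deriv (fun s => u x s) t
        + α * (u x t) ^ q * deriv (fun y => u y t) x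
        - deriv (fun y => deriv (fun z => u z t) y) x
      = η * u x t * (1 - (u x t) ^ q) := by
  intro x t
  set k : ℝ := (-α * q) / (2 * (q + 1)) with hk
  set F : ℝ → ℝ := fun r => (1/2 + (1/2) * Real.tanh (k * r)) ^ (1/q : ℝ) with hF
  set G : ℝ → ℝ := fun r => 1/2 + (1/2) * Real.tanh (k * r) with hGdef
  have hq1 : (0:ℝ) < q + 1 := by linarith
  have hufx : ∀ y s : ℝ, u y s = F (y - c * s) := fun y s => hu y s
  -- time derivative
  have hlin_t : HasDerivAt (fun s : ℝ => x - c * s) (-c) t := by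
    simpa using ((hasDerivAt_id t).const_mul c).const_sub x
  have h_ut : deriv (fun s => u x s) t
      = (2 * k / q) * F (x - c * t) * (1 - G (x - c * t)) * (-c) := by
    have h := (my_hasDerivAt_f k q hq (x - c * t)).comp t hlin_t
    have heq : (fun s => u x s) = (F ∘ fun s : ℝ => x - c * s) := funext fun s => hufx x s
    rw [heq]
    exact h.deriv
  -- space derivative at an arbitrary point
  have h_ux : ∀ y : ℝ, deriv (fun z => u z t) y
      = (2 * k / q) * F (y - c * t) * (1 - G (y - c * t)) := by
    intro y
    have hlin : HasDerivAt (fun z : ℝ => z - c * t) 1 y := (hasDerivAt_id y).sub_const (c * t)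
    have h := (my_hasDerivAt_f k q hq (y - c * t)).comp y hlin
    have heq : (fun z => u z t) = (F ∘ fun z : ℝ => z - c * t) := funext fun z => hufx z t
    rw [heq, h.deriv, mul_one]
  -- second space derivative
  have h_uxx : deriv (fun y => deriv (fun z => u z t) y) x
      = (2 * k / q) * ((2 * k / q) * F (x - c * t) * (1 - G (x - c * t))) * (1 - G (x - c * t))
        + ((2 * k / q) * F (x - c * t))
          * (-(2 * k * G (x - c * t) * (1 - G (x - c * t)))) := by
    have hD : (fun y => deriv (fun z => u z t) y)
        = (fun y => (2 * k / q) * F (y - c * t) * (1 - G (y - c * t))) := funext h_ux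
    have hlin : HasDerivAt (fun y : ℝ => y - c * t) 1 x := (hasDerivAt_id x).sub_const (c * t)
    have hFc : HasDerivAt (fun y : ℝ => F (y - c * t))
        ((2 * k / q) * F (x - c * t) * (1 - G (x - c * t))) x := by
      have h := (my_hasDerivAt_f k q hq (x - c * t)).comp x hlin
      rw [mul_one] at h
      exact h
    have hGc : HasDerivAt (fun y : ℝ => G (y - c * t))
        (2 * k * G (x - c * t) * (1 - G (x - c * t))) x := by
      have h := (my_hasDerivAt_g k (x - c * t)).comp x hlin
      rw [mul_one] at h
      exact h
    have htot := (hFc.const_mul ((2 : ℝ) * k / q)).mul (hGc.const_sub 1)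
    rw [hD]
    exact htot.deriv
  have huq : (u x t) ^ q = G (x - c * t) := by
    rw [hufx x t]
    exact my_fq k q hq (x - c * t)
  rw [h_ut, h_uxx, h_ux x, huq, hufx x t]
  set Fv : ℝ := F (x - c * t)
  set Gv : ℝ := G (x - c * t)
  rw [hc, hk]
  field_simp
  ring
end

section
/- Let h > 0, λ ∈ ℝ, and let x_j = a + j h be uniform knots. The extended cubic B-spline E_i is twice continuously differentiable on ℝ: E_i, E_i′ and E_i″ exist everywhere and are continuous (i.e., E_i is of class C² on ℝ). -/
open Filter Set

lemma hasDerivAt_maxpow (c : ℝ) (n : ℕ) (x : ℝ) :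
    HasDerivAt (fun y => max (y - c) 0 ^ (n + 2)) ((n + 2) * max (x - c) 0 ^ (n + 1)) x := by
  rcases lt_trichotomy x c with hx | rfl | hx
  · have hm : max (x - c) 0 = 0 := max_eq_right (by linarith)
    have hev : (fun y : ℝ => (0:ℝ)) =ᶠ[nhds x] fun y => max (y - c) 0 ^ (n + 2) := by
      filter_upwards [Iio_mem_nhds hx] with y hy
      have : max (y - c) 0 = 0 := max_eq_right (by simp at hy; linarith)
      simp [this]
    have h0 : HasDerivAt (fun _ : ℝ => (0:ℝ)) 0 x := hasDerivAt_const x 0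
    have := h0.congr_of_eventuallyEq hev.symm
    simpa [hm] using this
  · -- x = c
    have hm : max (x - x) 0 = 0 := by simp
    rw [hm]
    simp only [zero_pow (Nat.succ_ne_zero n), mul_zero]
    rw [hasDerivAt_iff_tendsto_slope]
    apply squeeze_zero_norm' (a := fun y => |y - x| ^ (n + 1))
    · filter_upwards [self_mem_nhdsWithin] with y hy
      have ht : y - x ≠ 0 := sub_ne_zero.mpr hy
      have habs : (0:ℝ) < |y - x| := abs_pos.mpr ht
      rw [slope_def_field]
      have hfc : max (x - x) 0 ^ (n + 2) = 0 := by simp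
      rw [hfc, sub_zero, Real.norm_eq_abs, abs_div]
      rw [div_le_iff₀ habs]
      have h1 : |max (y - x) 0 ^ (n + 2)| = max (y - x) 0 ^ (n + 2) :=
        abs_of_nonneg (pow_nonneg (le_max_right _ _) _)
      rw [h1]
      calc max (y - x) 0 ^ (n + 2) ≤ |y - x| ^ (n + 2) :=
            pow_le_pow_left₀ (le_max_right _ _) (max_le (le_abs_self _) (abs_nonneg _)) _
        _ = |y - x| ^ (n + 1) * |y - x| := by ring
    · have hc : Continuous fun y : ℝ => |y - x| ^ (n + 1) :=
        ((continuous_id.sub continuous_const).abs).pow _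
      exact tendsto_nhdsWithin_of_tendsto_nhds (by simpa using hc.tendsto x)
  · have hm : max (x - c) 0 = x - c := max_eq_left (by linarith)
    have hev : (fun y : ℝ => (y - c) ^ (n + 2)) =ᶠ[nhds x] fun y => max (y - c) 0 ^ (n + 2) := by
      filter_upwards [Ioi_mem_nhds hx] with y hy
      have : max (y - c) 0 = y - c := max_eq_left (by simp at hy; linarith)
      simp [this]
    have h0 : HasDerivAt (fun y : ℝ => (y - c) ^ (n + 2)) ((n + 2) * (x - c) ^ (n + 1)) x := by
      have := ((hasDerivAt_id x).sub_const c).pow (n + 2)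
      simpa [Pi.pow_def] using this
    have := h0.congr_of_eventuallyEq hev.symm
    simpa [hm] using this

lemma contDiff_maxpow (c : ℝ) : ∀ k : ℕ, ContDiff ℝ k (fun x => max (x - c) 0 ^ (k + 1))
  | 0 => by
    rw [Nat.cast_zero, contDiff_zero]
    exact (((continuous_id.sub continuous_const).max continuous_const).pow _)
  | (k + 1) => by
    have hcast : ((k : ℕ) + 1 : ℕ∞) = ((k : ℕ∞) + 1) := by push_cast; ring
    rw [show ((k + 1 : ℕ) : WithTop ℕ∞) = (k : WithTop ℕ∞) + 1 by push_cast; ring,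
      contDiff_succ_iff_deriv]
    refine ⟨fun x => ((hasDerivAt_maxpow c k x).differentiableAt), by simp, ?_⟩
    have hd : (deriv fun x => max (x - c) 0 ^ (k + 1 + 1)) =
        fun x => ((k : ℝ) + 2) * max (x - c) 0 ^ (k + 1) := by
      funext x
      have := (hasDerivAt_maxpow c k x).deriv
      rw [show k + 2 = k + 1 + 1 by ring] at this
      rw [this]
    rw [hd]
    exact contDiff_const.mul (contDiff_maxpow c k)

/-- The uniform knots `x_j = a + j h`. -/
noncomputable def knot (a h : ℝ) (j : ℤ) : ℝ := a + (j : ℝ) * h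

/-- The extended cubic B-spline with free parameter `lam`, centered at the knot
`x_i = a + i h` of the uniform knot sequence with spacing `h`. -/
noncomputable def extCubicBSpline (a h lam : ℝ) (i : ℤ) (x : ℝ) : ℝ :=
  (1 / (24 * h ^ 4)) *
    (if x ∈ Set.Icc (knot a h (i - 2)) (knot a h (i - 1)) then
        4 * h * (1 - lam) * (x - knot a h (i - 2)) ^ 3 + 3 * lam * (x - knot a h (i - 2)) ^ 4
      else if x ∈ Set.Icc (knot a h (i - 1)) (knot a h i) then
        (4 - lam) * h ^ 4 + 12 * h ^ 3 * (x - knot a h (i - 1))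
          + 6 * h ^ 2 * (2 + lam) * (x - knot a h (i - 1)) ^ 2
          - 12 * h * (x - knot a h (i - 1)) ^ 3 - 3 * lam * (x - knot a h (i - 1)) ^ 4
      else if x ∈ Set.Icc (knot a h i) (knot a h (i + 1)) then
        (4 - lam) * h ^ 4 - 12 * h ^ 3 * (x - knot a h (i + 1))
          + 6 * h ^ 2 * (2 + lam) * (x - knot a h (i + 1)) ^ 2
          + 12 * h * (x - knot a h (i + 1)) ^ 3 - 3 * lam * (x - knot a h (i + 1)) ^ 4
      else if x ∈ Set.Icc (knot a h (i + 1)) (knot a h (i + 2)) then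
        4 * h * (lam - 1) * (x - knot a h (i + 2)) ^ 3 + 3 * lam * (x - knot a h (i + 2)) ^ 4
      else 0)

/-- The extended cubic B-spline is twice continuously differentiable on ℝ. -/
theorem extCubicBSpline_contDiff (a h lam : ℝ) (hh : 0 < h) (i : ℤ) :
    ContDiff ℝ 2 (extCubicBSpline a h lam i) := by
  set c0 : ℝ := knot a h (i - 2) with hc0
  set c1 : ℝ := knot a h (i - 1) with hc1
  set c2 : ℝ := knot a h i with hc2
  set c3 : ℝ := knot a h (i + 1) with hc3
  set c4 : ℝ := knot a h (i + 2) with hc4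
  have e0 : c0 = a + ((i : ℝ) - 2) * h := by rw [hc0, knot]; push_cast; ring
  have e1 : c1 = a + ((i : ℝ) - 1) * h := by rw [hc1, knot]; push_cast; ring
  have e2 : c2 = a + (i : ℝ) * h := by rw [hc2, knot]
  have e3 : c3 = a + ((i : ℝ) + 1) * h := by rw [hc3, knot]; push_cast; ring
  have e4 : c4 = a + ((i : ℝ) + 2) * h := by rw [hc4, knot]; push_cast; ring
  have key : extCubicBSpline a h lam i = fun x =>
      (1 / (24 * h ^ 4)) *
        (4 * h * (1 - lam) * max (x - c0) 0 ^ 3 + 3 * lam * max (x - c0) 0 ^ 4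
          + (-(8 * h * (2 + lam))) * max (x - c1) 0 ^ 3 + (-(6 * lam)) * max (x - c1) 0 ^ 4
          + 24 * h * (1 + lam) * max (x - c2) 0 ^ 3
          + (-(8 * h * (2 + lam))) * max (x - c3) 0 ^ 3 + 6 * lam * max (x - c3) 0 ^ 4
          + 4 * h * (1 - lam) * max (x - c4) 0 ^ 3 + (-(3 * lam)) * max (x - c4) 0 ^ 4) := by
    funext x
    simp only [extCubicBSpline, ← hc0, ← hc1, ← hc2, ← hc3, ← hc4, Set.mem_Icc]
    split_ifs with h1 h2 h3 h4
    · obtain ⟨ha, hb⟩ := h1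
      rw [max_eq_left (by linarith [e0, e1, e2, e3, e4]),
        max_eq_right (by linarith [e0, e1, e2, e3, e4]),
        max_eq_right (by linarith [e0, e1, e2, e3, e4]),
        max_eq_right (by linarith [e0, e1, e2, e3, e4]),
        max_eq_right (by linarith [e0, e1, e2, e3, e4])]
      ring
    · obtain ⟨ha, hb⟩ := h2
      rw [max_eq_left (by linarith [e0, e1, e2, e3, e4]),
        max_eq_left (by linarith [e0, e1, e2, e3, e4]),
        max_eq_right (by linarith [e0, e1, e2, e3, e4]),
        max_eq_right (by linarith [e0, e1, e2, e3, e4]),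
        max_eq_right (by linarith [e0, e1, e2, e3, e4])]
      rw [e0, e1]
      ring
    · obtain ⟨ha, hb⟩ := h3
      rw [max_eq_left (by linarith [e0, e1, e2, e3, e4]),
        max_eq_left (by linarith [e0, e1, e2, e3, e4]),
        max_eq_left (by linarith [e0, e1, e2, e3, e4]),
        max_eq_right (by linarith [e0, e1, e2, e3, e4]),
        max_eq_right (by linarith [e0, e1, e2, e3, e4])]
      rw [e0, e1, e2, e3]
      ring
    · obtain ⟨ha, hb⟩ := h4
      rw [max_eq_left (by linarith [e0, e1, e2, e3, e4]),
        max_eq_left (by linarith [e0, e1, e2, e3, e4]),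
        max_eq_left (by linarith [e0, e1, e2, e3, e4]),
        max_eq_left (by linarith [e0, e1, e2, e3, e4]),
        max_eq_right (by linarith [e0, e1, e2, e3, e4])]
      rw [e0, e1, e2, e3, e4]
      ring
    · rcases lt_or_ge x c0 with hx | hx
      · rw [max_eq_right (by linarith [e0, e1, e2, e3, e4]),
          max_eq_right (by linarith [e0, e1, e2, e3, e4]),
          max_eq_right (by linarith [e0, e1, e2, e3, e4]),
          max_eq_right (by linarith [e0, e1, e2, e3, e4]),
          max_eq_right (by linarith [e0, e1, e2, e3, e4])]
        ring
      · have hx1 : c1 < x := by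
          by_contra hcon; push_neg at hcon; exact h1 ⟨hx, hcon⟩
        have hx2 : c2 < x := by
          by_contra hcon; push_neg at hcon; exact h2 ⟨le_of_lt hx1, hcon⟩
        have hx3 : c3 < x := by
          by_contra hcon; push_neg at hcon; exact h3 ⟨le_of_lt hx2, hcon⟩
        have hx4 : c4 < x := by
          by_contra hcon; push_neg at hcon; exact h4 ⟨le_of_lt hx3, hcon⟩
        rw [max_eq_left (by linarith), max_eq_left (by linarith),
          max_eq_left (by linarith), max_eq_left (by linarith),
          max_eq_left (by linarith)]
        rw [e0, e1, e2, e3, e4]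
        ring
  have p3 : ∀ c : ℝ, ContDiff ℝ 2 (fun x => max (x - c) 0 ^ 3) := by
    intro c
    have := contDiff_maxpow c 2
    norm_num at this
    exact this
  have p4 : ∀ c : ℝ, ContDiff ℝ 2 (fun x => max (x - c) 0 ^ 4) := by
    intro c
    have := contDiff_maxpow c 3
    norm_num at this
    exact this.of_le (by norm_num)
  rw [key]
  exact contDiff_const.mul
    (((((((((contDiff_const.mul (p3 c0)).add (contDiff_const.mul (p4 c0))).add
      (contDiff_const.mul (p3 c1))).add (contDiff_const.mul (p4 c1))).add
      (contDiff_const.mul (p3 c2))).add (contDiff_const.mul (p3 c3))).add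
      (contDiff_const.mul (p4 c3))).add (contDiff_const.mul (p3 c4))).add
      (contDiff_const.mul (p4 c4)))
end
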